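/- arXiv:1104.3531 — 2 statements merged into one kernel-verified Lean document; each statement's English description precedes it below -/
import Mathlib

section
/- Let m be a natural number and let α = 1/(m+1) or α = -1/(m+1). Then det_α(A) ≥ 0 for every complex Hermitian positive semidefinite matrix A of every size. -/
open ComplexOrder

/-- The number of disjoint cycles of a permutation, counting fixed points as cycles. -/
noncomputable def cycleCount {ι : Type*} [Fintype ι] [DecidableEq ι] (σ : Equiv.Perm ι) : ℕ :=
  (Fintype.card ι - σ.cycleType.sum) + Multiset.card σ.cycleType

/-- The α-determinant: `det_α(A) = ∑_{σ} α^{n - c(σ)} ∏_i a_{i σ(i)}`. -/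
noncomputable def detAlpha {ι : Type*} [Fintype ι] [DecidableEq ι] {R : Type*} [CommRing R]
    (α : R) (A : Matrix ι ι R) : R :=
  ∑ σ : Equiv.Perm ι, α ^ (Fintype.card ι - cycleCount σ) * ∏ i, A i (σ i)

section AuxiliaryProofs

open Matrix

set_option linter.unusedSectionVars false


lemma nonneg_of_real_mul {r : ℝ} (hr : 0 < r) {z : ℂ} (h : 0 ≤ (r : ℂ) * z) : 0 ≤ z := by
  rw [Complex.nonneg_iff] at h ⊢
  rw [Complex.re_ofReal_mul, Complex.im_ofReal_mul] at h
  obtain ⟨h1, h2⟩ := h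
  constructor
  · nlinarith
  · rcases mul_eq_zero.mp h2.symm with h | h
    · exact absurd h hr.ne'
    · exact h.symm

noncomputable def permMat {ι : Type*} [Fintype ι] [DecidableEq ι] (A : Matrix ι ι ℂ) : ℂ :=
  ∑ σ : Equiv.Perm ι, ∏ i, A i (σ i)

lemma permMat_nonneg {ι : Type*} [Fintype ι] [DecidableEq ι] {A : Matrix ι ι ℂ}
    (hA : A.PosSemidef) : 0 ≤ permMat A := by
  obtain ⟨B, rfl⟩ : ∃ B : Matrix ι ι ℂ, A = Bᴴ * B := by
    open scoped MatrixOrder in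
    obtain ⟨X, hX, -, hXA⟩ := CFC.exists_sqrt_of_isSelfAdjoint_of_quasispectrumRestricts
      hA.isHermitian (QuasispectrumRestricts.nnreal_of_nonneg hA.nonneg)
    exact ⟨X, by rw [← hXA]; exact congrArg (· * X) hX.star_eq.symm⟩
  have key : (Fintype.card (Equiv.Perm ι) : ℂ) * permMat (Bᴴ * B) =
      ∑ g : ι → ι, (starRingEnd ℂ) (∑ σ : Equiv.Perm ι, ∏ i, B (g i) (σ i)) *
        (∑ σ : Equiv.Perm ι, ∏ i, B (g i) (σ i)) := by
    have inner : ∀ τ : Equiv.Perm ι,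
        ∑ σ : Equiv.Perm ι, ∏ i, (Bᴴ * B) (τ i) (σ i) = permMat (Bᴴ * B) := by
      intro τ
      calc ∑ σ : Equiv.Perm ι, ∏ i, (Bᴴ * B) (τ i) (σ i)
          = ∑ σ : Equiv.Perm ι, ∏ i, (Bᴴ * B) (τ i) ((σ * τ) i) :=
            (Fintype.sum_equiv (Equiv.mulRight τ) _ _ (fun σ => rfl)).symm
        _ = ∑ σ : Equiv.Perm ι, ∏ i, (Bᴴ * B) i (σ i) :=
            Finset.sum_congr rfl fun σ _ => Equiv.prod_comp τ (fun j => (Bᴴ * B) j (σ j))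
        _ = permMat (Bᴴ * B) := rfl
    have lhs : ∑ τ : Equiv.Perm ι, ∑ σ : Equiv.Perm ι, ∏ i, (Bᴴ * B) (τ i) (σ i) =
        (Fintype.card (Equiv.Perm ι) : ℂ) * permMat (Bᴴ * B) := by
      rw [Finset.sum_congr rfl (fun τ _ => inner τ), Finset.sum_const, Finset.card_univ,
        nsmul_eq_mul]
    rw [← lhs]
    have expand : ∀ τ σ : Equiv.Perm ι, ∏ i, (Bᴴ * B) (τ i) (σ i) =
        ∑ g : ι → ι, (∏ i, (starRingEnd ℂ) (B (g i) (τ i))) * ∏ i, B (g i) (σ i) := by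
      intro τ σ
      have h1 : ∀ i, (Bᴴ * B) (τ i) (σ i) = ∑ k, (starRingEnd ℂ) (B k (τ i)) * B k (σ i) := by
        intro i
        simp [Matrix.mul_apply, Matrix.conjTranspose_apply]
      rw [Finset.prod_congr rfl (fun i _ => h1 i), Finset.prod_univ_sum]
      exact Finset.sum_congr rfl fun g _ => Finset.prod_mul_distrib
    calc ∑ τ : Equiv.Perm ι, ∑ σ : Equiv.Perm ι, ∏ i, (Bᴴ * B) (τ i) (σ i)
        = ∑ τ : Equiv.Perm ι, ∑ σ : Equiv.Perm ι, ∑ g : ι → ι,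
            (∏ i, (starRingEnd ℂ) (B (g i) (τ i))) * ∏ i, B (g i) (σ i) :=
          Finset.sum_congr rfl fun τ _ => Finset.sum_congr rfl fun σ _ => expand τ σ
      _ = ∑ τ : Equiv.Perm ι, ∑ g : ι → ι, ∑ σ : Equiv.Perm ι,
            (∏ i, (starRingEnd ℂ) (B (g i) (τ i))) * ∏ i, B (g i) (σ i) :=
          Finset.sum_congr rfl fun τ _ => Finset.sum_comm
      _ = ∑ g : ι → ι, ∑ τ : Equiv.Perm ι, ∑ σ : Equiv.Perm ι,
            (∏ i, (starRingEnd ℂ) (B (g i) (τ i))) * ∏ i, B (g i) (σ i) :=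
          Finset.sum_comm
      _ = ∑ g : ι → ι, (starRingEnd ℂ) (∑ σ : Equiv.Perm ι, ∏ i, B (g i) (σ i)) *
            (∑ σ : Equiv.Perm ι, ∏ i, B (g i) (σ i)) := by
          refine Finset.sum_congr rfl fun g _ => ?_
          have hc : (starRingEnd ℂ) (∑ σ : Equiv.Perm ι, ∏ i, B (g i) (σ i)) =
              ∑ σ : Equiv.Perm ι, ∏ i, (starRingEnd ℂ) (B (g i) (σ i)) := by
            rw [map_sum]
            exact Finset.sum_congr rfl fun τ _ => map_prod _ _ _
          rw [hc, Finset.sum_mul_sum]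
  have h1 : 0 ≤ (Fintype.card (Equiv.Perm ι) : ℂ) * permMat (Bᴴ * B) := by
    rw [key]
    refine Finset.sum_nonneg fun g _ => ?_
    rw [mul_comm, Complex.mul_conj]
    exact Complex.zero_le_real.mpr (Complex.normSq_nonneg _)
  have hres : 0 ≤ ((Fintype.card (Equiv.Perm ι) : ℝ) : ℂ) * permMat (Bᴴ * B) := by
    rwa [Complex.ofReal_natCast]
  exact nonneg_of_real_mul (by exact_mod_cast Fintype.card_pos) hres



section Counting

variable {ι : Type*} [Fintype ι] [DecidableEq ι]

lemma card_quotient_sameCycle (σ : Equiv.Perm ι)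
    [F : Fintype (Quotient (Equiv.Perm.SameCycle.setoid σ))] :
    Fintype.card (Quotient (Equiv.Perm.SameCycle.setoid σ)) = cycleCount σ := by
  classical
  let sd := Equiv.Perm.SameCycle.setoid σ
  let T := {x : ι // σ x = x} ⊕ {c : Equiv.Perm ι // c ∈ σ.cycleFactorsFinset}
  let φ₀ : ι → T := fun x =>
    if h : σ x = x then Sum.inl ⟨x, h⟩
    else Sum.inr ⟨σ.cycleOf x,
      Equiv.Perm.cycleOf_mem_cycleFactorsFinset_iff.mpr (Equiv.Perm.mem_support.mpr h)⟩
  have wd : ∀ a b : ι, σ.SameCycle a b → φ₀ a = φ₀ b := by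
    intro a b hab
    by_cases ha : σ a = a
    · obtain ⟨i, hi⟩ := hab
      have : b = a := by
        rw [← hi, Equiv.Perm.zpow_apply_eq_self_of_apply_eq_self ha]
      rw [this]
    · have hb : ¬ σ b = b := by
        intro hb
        apply ha
        obtain ⟨j, hj⟩ := hab.symm
        calc σ a = σ ((σ ^ j) b) := by rw [hj]
          _ = (σ * σ ^ j) b := rfl
          _ = (σ ^ j * σ) b := by rw [((Commute.refl σ).zpow_right j).eq]
          _ = (σ ^ j) (σ b) := rfl
          _ = (σ ^ j) b := by rw [hb]
          _ = a := hj
      simp only [φ₀, dif_neg ha, dif_neg hb]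
      congr 1
      exact Subtype.ext hab.cycleOf_eq
  let φ : Quotient sd → T := Quotient.lift φ₀ wd
  have hbij : Function.Bijective φ := by
    constructor
    · rintro ⟨x⟩ ⟨y⟩ hxy
      change φ₀ x = φ₀ y at hxy
      refine Quotient.sound ?_
      show σ.SameCycle x y
      by_cases hx : σ x = x <;> by_cases hy : σ y = y
      · simp only [φ₀, dif_pos hx, dif_pos hy] at hxy
        obtain rfl : x = y := congrArg Subtype.val (Sum.inl_injective hxy)
        exact Equiv.Perm.SameCycle.rfl
      · simp [φ₀, dif_pos hx, dif_neg hy] at hxy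
      · simp [φ₀, dif_neg hx, dif_pos hy] at hxy
      · simp only [φ₀, dif_neg hx, dif_neg hy] at hxy
        have hxy' : σ.cycleOf x = σ.cycleOf y := congrArg Subtype.val (Sum.inr_injective hxy)
        have hmem : y ∈ (σ.cycleOf y).support :=
          Equiv.Perm.mem_support_cycleOf_iff.mpr
            ⟨Equiv.Perm.SameCycle.rfl, Equiv.Perm.mem_support.mpr hy⟩
        rw [← hxy'] at hmem
        exact (Equiv.Perm.mem_support_cycleOf_iff.mp hmem).1
    · rintro (⟨x, hx⟩ | ⟨c, hc⟩)
      · exact ⟨Quotient.mk sd x, by simp [φ, φ₀, dif_pos hx]⟩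
      · obtain ⟨hcyc, hsup⟩ := Equiv.Perm.mem_cycleFactorsFinset_iff.mp hc
        obtain ⟨x, hcx, -⟩ := hcyc
        have hxs : x ∈ c.support := Equiv.Perm.mem_support.mpr hcx
        have hσx : σ x = c x := (hsup x hxs).symm
        have hx : ¬ σ x = x := by rw [hσx]; exact hcx
        refine ⟨Quotient.mk sd x, ?_⟩
        simp only [φ, Quotient.lift_mk, φ₀, dif_neg hx]
        congr 1
        exact Subtype.ext (Equiv.Perm.cycle_is_cycleOf hxs hc).symm
  have hcardT : Fintype.card T = cycleCount σ := by
    rw [Fintype.card_sum]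
    have h1 : Fintype.card {x : ι // σ x = x} = Fintype.card ι - σ.cycleType.sum := by
      rw [← Equiv.Perm.card_fixedPoints σ]
      exact Fintype.card_congr (Equiv.subtypeEquivRight fun x => Iff.rfl)
    have h2 : Fintype.card {c : Equiv.Perm ι // c ∈ σ.cycleFactorsFinset} =
        Multiset.card σ.cycleType := by
      rw [Equiv.Perm.cycleType_def, Multiset.card_map]
      exact Fintype.card_coe _
    rw [h1, h2, cycleCount]
  rw [← hcardT]
  exact Fintype.card_of_bijective hbij

lemma cycleCount_le (σ : Equiv.Perm ι) : cycleCount σ ≤ Fintype.card ι := by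
  classical
  letI : Fintype (Quotient (Equiv.Perm.SameCycle.setoid σ)) := Fintype.ofFinite _
  rw [← card_quotient_sameCycle σ]
  exact Fintype.card_le_of_surjective (Quotient.mk _)
    (fun q => Quotient.inductionOn q fun x => ⟨x, rfl⟩)

lemma card_fixed_fun (σ : Equiv.Perm ι) (k : ℕ) :
    Fintype.card {f : ι → Fin k // f ∘ σ = f} = k ^ cycleCount σ := by
  classical
  set sd := Equiv.Perm.SameCycle.setoid σ with hsd
  letI : Fintype (Quotient sd) := Fintype.ofFinite _
  have hz : ∀ (f : ι → Fin k), f ∘ σ = f → ∀ (i : ℤ) (x : ι), f ((σ ^ i) x) = f x := by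
    intro f hf
    have hn : ∀ (n : ℕ) (x : ι), f ((σ ^ n) x) = f x := by
      intro n
      induction n with
      | zero => simp
      | succ n ih =>
        intro x
        rw [pow_succ, Equiv.Perm.mul_apply, ih (σ x)]
        exact congrFun hf x
    intro i x
    cases i with
    | ofNat n => simpa using hn n x
    | negSucc n =>
      have h := hn (n + 1) ((σ ^ (n + 1))⁻¹ x)
      rw [show ∀ y, (σ ^ (n + 1)) ((σ ^ (n + 1))⁻¹ y) = y from
        fun y => (σ ^ (n + 1)).apply_symm_apply y] at h
      rw [zpow_negSucc]
      exact h.symm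
  let e : {f : ι → Fin k // f ∘ σ = f} ≃ (Quotient sd → Fin k) :=
    { toFun := fun f => Quotient.lift f.1 (fun a b hab => by
        obtain ⟨i, hi⟩ := hab
        rw [← hi]
        exact (hz f.1 f.2 i a).symm),
      invFun := fun g => ⟨fun x => g (Quotient.mk sd x), by
        funext x
        exact congrArg g (Quotient.sound
          (Equiv.Perm.sameCycle_apply_right.mpr Equiv.Perm.SameCycle.rfl).symm)⟩,
      left_inv := fun f => Subtype.ext rfl,
      right_inv := fun g => funext fun q => Quotient.inductionOn q fun x => rfl }
  rw [Fintype.card_congr e, Fintype.card_fun, Fintype.card_fin, card_quotient_sameCycle]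

end Counting

section BlockMatrix

variable {ι : Type*} [Fintype ι] [DecidableEq ι] {k : ℕ}

/-- The matrix `A` with entries zeroed out between different blocks of `f`. -/
noncomputable def Bmat (A : Matrix ι ι ℂ) (f : ι → Fin k) : Matrix ι ι ℂ :=
  Matrix.of fun i j => if f i = f j then A i j else 0

lemma Bmat_posSemidef {A : Matrix ι ι ℂ} (hA : A.PosSemidef) (f : ι → Fin k) :
    (Bmat A f).PosSemidef := by
  classical
  let D : Fin k → Matrix ι ι ℂ := fun c => Matrix.diagonal (fun i => if f i = c then 1 else 0)
  have hrepr : Bmat A f = ∑ c : Fin k, D c * A * D c := by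
    ext i j
    rw [Matrix.sum_apply]
    have hterm : ∀ c : Fin k, (D c * A * D c) i j =
        (if f i = c then (1:ℂ) else 0) * A i j * (if f j = c then (1:ℂ) else 0) := by
      intro c
      rw [Matrix.mul_diagonal, Matrix.diagonal_mul]
    rw [Finset.sum_congr rfl fun c _ => hterm c]
    have hterm2 : ∀ c : Fin k, (if f i = c then (1:ℂ) else 0) * A i j *
        (if f j = c then (1:ℂ) else 0) =
        if c = f i then (if f i = f j then A i j else 0) else 0 := by
      intro c
      by_cases h1 : f i = c
      · by_cases h2 : f j = c
        · rw [if_pos h1, if_pos h2, if_pos h1.symm, if_pos (h1.trans h2.symm)]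
          ring
        · rw [if_pos h1, if_neg h2, if_pos h1.symm,
            if_neg (fun h : f i = f j => h2 (h.symm.trans h1))]
          ring
      · rw [if_neg h1, if_neg (fun h : c = f i => h1 h.symm)]
        ring
    rw [Finset.sum_congr rfl fun c _ => hterm2 c, Finset.sum_ite_eq' Finset.univ (f i)]
    simp [Bmat]
  rw [hrepr]
  refine Finset.sum_induction _ _ (fun a b ha hb => ha.add hb) Matrix.PosSemidef.zero ?_
  intro c _
  have hD : (D c)ᴴ = D c := by
    have hv : (star fun i => if f i = c then (1:ℂ) else 0) =
        fun i => if f i = c then (1:ℂ) else 0 := by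
      funext i
      by_cases h : f i = c <;> simp [h]
    rw [Matrix.diagonal_conjTranspose, hv]
  have := hA.mul_mul_conjTranspose_same (D c)
  rwa [hD] at this

lemma prod_Bmat (A : Matrix ι ι ℂ) (f : ι → Fin k) (σ : Equiv.Perm ι) :
    ∏ i, Bmat A f i (σ i) = if f ∘ σ = f then ∏ i, A i (σ i) else 0 := by
  by_cases h : f ∘ σ = f
  · rw [if_pos h]
    refine Finset.prod_congr rfl fun i _ => ?_
    exact if_pos (congrFun h i).symm
  · rw [if_neg h]
    obtain ⟨i, hi⟩ : ∃ i, f (σ i) ≠ f i := by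
      by_contra h'
      push_neg at h'
      exact h (funext h')
    exact Finset.prod_eq_zero (Finset.mem_univ i)
      (if_neg (fun hh : f i = f (σ i) => hi hh.symm))

lemma det_eq_sum_prod (M : Matrix ι ι ℂ) :
    M.det = ∑ σ : Equiv.Perm ι, ((Equiv.Perm.sign σ : ℤ) : ℂ) * ∏ i, M i (σ i) := by
  rw [← Matrix.det_transpose M, Matrix.det_apply']
  rfl

lemma det_Bmat (A : Matrix ι ι ℂ) (f : ι → Fin k) :
    (Bmat A f).det = ∑ σ : Equiv.Perm ι,
      if f ∘ σ = f then ((Equiv.Perm.sign σ : ℤ) : ℂ) * ∏ i, A i (σ i) else 0 := by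
  rw [det_eq_sum_prod]
  refine Finset.sum_congr rfl fun σ _ => ?_
  rw [prod_Bmat]
  by_cases h : f ∘ σ = f <;> simp [h]

lemma permMat_Bmat (A : Matrix ι ι ℂ) (f : ι → Fin k) :
    permMat (Bmat A f) = ∑ σ : Equiv.Perm ι,
      if f ∘ σ = f then ∏ i, A i (σ i) else 0 := by
  rw [permMat]
  exact Finset.sum_congr rfl fun σ _ => prod_Bmat A f σ

lemma det_nonneg_of_posSemidef {A : Matrix ι ι ℂ} (hA : A.PosSemidef) : 0 ≤ A.det := by
  classical
  rw [hA.isHermitian.det_eq_prod_eigenvalues, ← RCLike.ofReal_prod]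
  exact RCLike.ofReal_nonneg.mpr (Finset.prod_nonneg fun i _ => hA.eigenvalues_nonneg i)

end BlockMatrix

section Sign

variable {ι : Type*} [Fintype ι] [DecidableEq ι]

lemma mcard_le_sum (s : Multiset ℕ) (h : ∀ x ∈ s, 1 ≤ x) : Multiset.card s ≤ s.sum := by
  calc Multiset.card s = (s.map fun _ => (1:ℕ)).sum := by
        rw [Multiset.map_const', Multiset.sum_replicate, smul_eq_mul, mul_one]
    _ ≤ (s.map id).sum := Multiset.sum_map_le_sum_map _ _ h
    _ = s.sum := by rw [Multiset.map_id]

lemma card_cycleType_le_sum (σ : Equiv.Perm ι) :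
    Multiset.card σ.cycleType ≤ σ.cycleType.sum :=
  mcard_le_sum _ fun x hx => le_trans (by norm_num) (Equiv.Perm.two_le_of_mem_cycleType hx)

lemma sum_cycleType_le_card (σ : Equiv.Perm ι) : σ.cycleType.sum ≤ Fintype.card ι := by
  rw [Equiv.Perm.sum_cycleType]
  exact le_trans (Finset.card_le_univ _) (le_of_eq (Finset.card_univ))

lemma sign_eq_pow (σ : Equiv.Perm ι) :
    ((Equiv.Perm.sign σ : ℤ) : ℂ) = (-1) ^ (Fintype.card ι - cycleCount σ) := by
  have hts := card_cycleType_le_sum σ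
  have hsn := sum_cycleType_le_card σ
  have hnc : Fintype.card ι - cycleCount σ =
      σ.cycleType.sum - Multiset.card σ.cycleType := by
    rw [cycleCount]; omega
  have h1 : ((Equiv.Perm.sign σ : ℤ) : ℂ) =
      (-1) ^ (σ.cycleType.sum + Multiset.card σ.cycleType) := by
    rw [Equiv.Perm.sign_of_cycleType]
    push_cast
    ring
  rw [h1, hnc]
  have hdecomp : σ.cycleType.sum + Multiset.card σ.cycleType =
      (σ.cycleType.sum - Multiset.card σ.cycleType) + 2 * Multiset.card σ.cycleType := by
    omega
  rw [hdecomp, pow_add, pow_mul]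
  norm_num

end Sign

section Main

lemma main_nonneg (k : ℕ) (hk : 0 < k) (ε : ℝ) (hε : ε = 1 ∨ ε = -1)
    {ι : Type*} [Fintype ι] [DecidableEq ι] {A : Matrix ι ι ℂ} (hA : A.PosSemidef) :
    0 ≤ detAlpha ((ε / k : ℝ) : ℂ) A := by
  classical
  have hkC : ((k : ℂ)) ≠ 0 := Nat.cast_ne_zero.mpr hk.ne'
  have hw : ∀ σ : Equiv.Perm ι,
      (k : ℂ) ^ (Fintype.card ι) * (((ε / k : ℝ) : ℂ) ^ (Fintype.card ι - cycleCount σ)) =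
      ((ε : ℂ)) ^ (Fintype.card ι - cycleCount σ) * (k : ℂ) ^ (cycleCount σ) := by
    intro σ
    have hc := cycleCount_le σ
    have hcast : ((ε / k : ℝ) : ℂ) = (ε : ℂ) / (k : ℂ) := by push_cast; ring
    have hsplit : (k : ℂ) ^ (Fintype.card ι) =
        (k : ℂ) ^ (Fintype.card ι - cycleCount σ) * (k : ℂ) ^ (cycleCount σ) := by
      rw [← pow_add]
      congr 1
      omega
    rw [hcast, div_pow, hsplit]
    have hkpow : ((k : ℂ)) ^ (Fintype.card ι - cycleCount σ) ≠ 0 := pow_ne_zero _ hkC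
    field_simp
  have hcount : ∀ σ : Equiv.Perm ι, ((k : ℂ)) ^ (cycleCount σ) =
      ∑ f : ι → Fin k, if f ∘ σ = f then (1 : ℂ) else 0 := by
    intro σ
    have h2 : ((k : ℂ)) ^ (cycleCount σ) = ((k ^ cycleCount σ : ℕ) : ℂ) := by push_cast; rfl
    rw [h2, ← card_fixed_fun σ k, Fintype.card_subtype, Finset.card_filter]
    push_cast
    rfl
  have key : (k : ℂ) ^ (Fintype.card ι) * detAlpha ((ε / k : ℝ) : ℂ) A =
      ∑ f : ι → Fin k, ∑ σ : Equiv.Perm ι,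
        if f ∘ σ = f then ((ε : ℂ)) ^ (Fintype.card ι - cycleCount σ) * ∏ i, A i (σ i)
        else 0 := by
    rw [detAlpha, Finset.mul_sum]
    calc ∑ σ : Equiv.Perm ι, (k : ℂ) ^ (Fintype.card ι) *
            (((ε / k : ℝ) : ℂ) ^ (Fintype.card ι - cycleCount σ) * ∏ i, A i (σ i))
        = ∑ σ : Equiv.Perm ι, ((ε : ℂ)) ^ (Fintype.card ι - cycleCount σ) *
            (k : ℂ) ^ (cycleCount σ) * ∏ i, A i (σ i) := by
          refine Finset.sum_congr rfl fun σ _ => ?_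
          rw [← mul_assoc, hw σ]
      _ = ∑ σ : Equiv.Perm ι, ∑ f : ι → Fin k,
            (if f ∘ σ = f then ((ε : ℂ)) ^ (Fintype.card ι - cycleCount σ) *
              ∏ i, A i (σ i) else 0) := by
          refine Finset.sum_congr rfl fun σ _ => ?_
          rw [hcount σ]
          rw [mul_comm (((ε : ℂ)) ^ (Fintype.card ι - cycleCount σ))
            (∑ f : ι → Fin k, if f ∘ σ = f then (1 : ℂ) else 0), mul_assoc, Finset.sum_mul]
          refine Finset.sum_congr rfl fun f _ => ?_
          by_cases h : f ∘ σ = f <;> simp [h]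
      _ = ∑ f : ι → Fin k, ∑ σ : Equiv.Perm ι,
            (if f ∘ σ = f then ((ε : ℂ)) ^ (Fintype.card ι - cycleCount σ) *
              ∏ i, A i (σ i) else 0) := Finset.sum_comm
  have hterm : ∀ f : ι → Fin k, 0 ≤ ∑ σ : Equiv.Perm ι,
      if f ∘ σ = f then ((ε : ℂ)) ^ (Fintype.card ι - cycleCount σ) * ∏ i, A i (σ i)
      else 0 := by
    intro f
    rcases hε with hε | hε
    · have heq : (∑ σ : Equiv.Perm ι,
          if f ∘ σ = f then ((ε : ℂ)) ^ (Fintype.card ι - cycleCount σ) * ∏ i, A i (σ i)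
          else 0) = permMat (Bmat A f) := by
        rw [permMat_Bmat]
        refine Finset.sum_congr rfl fun σ _ => ?_
        by_cases h : f ∘ σ = f <;> simp [h, hε]
      rw [heq]
      exact permMat_nonneg (Bmat_posSemidef hA f)
    · have heq : (∑ σ : Equiv.Perm ι,
          if f ∘ σ = f then ((ε : ℂ)) ^ (Fintype.card ι - cycleCount σ) * ∏ i, A i (σ i)
          else 0) = (Bmat A f).det := by
        rw [det_Bmat]
        refine Finset.sum_congr rfl fun σ _ => ?_
        by_cases h : f ∘ σ = f
        · rw [if_pos h, if_pos h, hε, sign_eq_pow σ]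
          norm_num
        · simp [h]
      rw [heq]
      exact det_nonneg_of_posSemidef (Bmat_posSemidef hA f)
  have h0 : 0 ≤ (k : ℂ) ^ (Fintype.card ι) * detAlpha ((ε / k : ℝ) : ℂ) A := by
    rw [key]
    exact Finset.sum_nonneg fun f _ => hterm f
  apply nonneg_of_real_mul (r := (k : ℝ) ^ (Fintype.card ι))
    (pow_pos (Nat.cast_pos.mpr hk) _)
  rwa [show (((k : ℝ) ^ (Fintype.card ι) : ℝ) : ℂ) = (k : ℂ) ^ (Fintype.card ι) by
    push_cast; rfl]

end Main


end AuxiliaryProofs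

/-- For `α = 1/(m+1)` or `α = -1/(m+1)`, `det_α(A) ≥ 0` for every complex Hermitian positive
semidefinite matrix `A` of every size. -/
theorem detAlpha_nonneg_of_psd_complex (m : ℕ) (α : ℝ)
    (hα : α = 1 / ((m : ℝ) + 1) ∨ α = -1 / ((m : ℝ) + 1)) :
    ∀ (N : ℕ) (A : Matrix (Fin N) (Fin N) ℂ), A.PosSemidef → 0 ≤ detAlpha (α : ℂ) A := by
  intro N A hA
  rcases hα with h | h
  · have h2 : α = ((1 : ℝ) / ((m + 1 : ℕ) : ℝ)) := by rw [h]; push_cast; ring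
    rw [h2]
    exact main_nonneg (m + 1) (Nat.succ_pos m) 1 (Or.inl rfl) hA
  · have h2 : α = ((-1 : ℝ) / ((m + 1 : ℕ) : ℝ)) := by rw [h]; push_cast; ring
    rw [h2]
    exact main_nonneg (m + 1) (Nat.succ_pos m) (-1) (Or.inr rfl) hA
end

section
/- Let 1 ≤ k ≤ n−1. Then the function x ↦ e_{k+1}(x)/e_k(x) is concave on (0,∞)^n, where e_j denotes the j-th elementary symmetric polynomial in x = (x_1,…,x_n). (The denominator e_k(x) is strictly positive on (0,∞)^n.) -/
open Finset

/-- Elementary symmetric polynomial over an index set `A`. -/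
noncomputable def esE {n : ℕ} (A : Finset (Fin n)) (k : ℕ) (x : Fin n → ℝ) : ℝ :=
  ∑ s ∈ A.powersetCard k, ∏ i ∈ s, x i

lemma esE_zero {n : ℕ} (A : Finset (Fin n)) (x : Fin n → ℝ) : esE A 0 x = 1 := by
  simp [esE, Finset.powersetCard_zero]

lemma esE_one {n : ℕ} (A : Finset (Fin n)) (x : Fin n → ℝ) : esE A 1 x = ∑ i ∈ A, x i := by
  simp [esE, Finset.powersetCard_one, Finset.sum_map]

lemma esE_pos {n : ℕ} {A : Finset (Fin n)} {k : ℕ} (h : k ≤ A.card) {x : Fin n → ℝ}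
    (hx : ∀ i, 0 < x i) : 0 < esE A k x := by
  refine Finset.sum_pos (fun s _ => Finset.prod_pos fun i _ => hx i) ?_
  exact Finset.powersetCard_nonempty.2 h

lemma esE_insert {n : ℕ} {A : Finset (Fin n)} {i : Fin n} (hi : i ∉ A) (k : ℕ) (x : Fin n → ℝ) :
    esE (insert i A) (k + 1) x = esE A (k + 1) x + x i * esE A k x := by
  unfold esE
  rw [Finset.powersetCard_succ_insert hi]
  rw [Finset.sum_union]
  · congr 1
    rw [Finset.sum_image]
    · rw [Finset.mul_sum]
      refine Finset.sum_congr rfl fun s hs => ?_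
      have hsub : s ⊆ A := (Finset.mem_powersetCard.1 hs).1
      have his : i ∉ s := fun h => hi (hsub h)
      rw [Finset.prod_insert his]
    · intro s hs t ht hst
      have hs' : i ∉ s := fun h => hi ((Finset.mem_powersetCard.1 hs).1 h)
      have ht' : i ∉ t := fun h => hi ((Finset.mem_powersetCard.1 ht).1 h)
      have := congrArg (Finset.erase · i) hst
      simpa [Finset.erase_insert hs', Finset.erase_insert ht'] using this
  · rw [Finset.disjoint_right]
    intro s hs hs'
    obtain ⟨t, ht, rfl⟩ := Finset.mem_image.1 hs
    have hsub : insert i t ⊆ A := (Finset.mem_powersetCard.1 hs').1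
    exact hi (hsub (Finset.mem_insert_self _ _))

lemma esE_erase {n : ℕ} {A : Finset (Fin n)} {i : Fin n} (hi : i ∈ A) (k : ℕ) (x : Fin n → ℝ) :
    esE A (k + 1) x = esE (A.erase i) (k + 1) x + x i * esE (A.erase i) k x := by
  conv_lhs => rw [← Finset.insert_erase hi]
  exact esE_insert (Finset.notMem_erase _ _) k x

/-- Derivative identity / double counting. -/
lemma esE_deriv {n : ℕ} (A : Finset (Fin n)) (k : ℕ) (x : Fin n → ℝ) :
    ∑ i ∈ A, x i * esE (A.erase i) k x = (k + 1 : ℝ) * esE A (k + 1) x := by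
  have rhs : (k + 1 : ℝ) * esE A (k + 1) x
      = ∑ t ∈ A.powersetCard (k + 1), ∑ i ∈ t, x i * ∏ j ∈ t.erase i, x j := by
    rw [esE, Finset.mul_sum]
    refine Finset.sum_congr rfl fun t ht => ?_
    have hcard : t.card = k + 1 := (Finset.mem_powersetCard.1 ht).2
    have : ∀ i ∈ t, x i * ∏ j ∈ t.erase i, x j = ∏ j ∈ t, x j := fun i hi =>
      Finset.mul_prod_erase t x hi
    rw [Finset.sum_congr rfl this, Finset.sum_const, hcard]
    simp [nsmul_eq_mul]
  rw [rhs]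
  unfold esE
  simp_rw [Finset.mul_sum]
  rw [Finset.sum_sigma' A (fun i => (A.erase i).powersetCard k)
    (fun i s => x i * ∏ j ∈ s, x j),
    Finset.sum_sigma' (A.powersetCard (k + 1)) (fun t => t)
    (fun t i => x i * ∏ j ∈ t.erase i, x j)]
  refine Finset.sum_bij' (fun p _ => (⟨insert p.1 p.2, p.1⟩ : Σ _ : Finset (Fin n), Fin n))
    (fun q _ => (⟨q.2, q.1.erase q.2⟩ : Σ _ : Fin n, Finset (Fin n))) ?_ ?_ ?_ ?_ ?_
  · rintro ⟨i, s⟩ hp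
    rw [Finset.mem_sigma] at hp
    obtain ⟨hiA, hs⟩ := hp
    rw [Finset.mem_powersetCard] at hs
    have his : i ∉ s := fun h => (Finset.notMem_erase i A) (hs.1 h)
    rw [Finset.mem_sigma, Finset.mem_powersetCard]
    refine ⟨⟨?_, ?_⟩, Finset.mem_insert_self _ _⟩
    · exact Finset.insert_subset hiA (hs.1.trans (Finset.erase_subset _ _))
    · rw [Finset.card_insert_of_notMem his, hs.2]
  · rintro ⟨t, i⟩ hq
    rw [Finset.mem_sigma] at hq
    obtain ⟨ht, hit⟩ := hq
    rw [Finset.mem_powersetCard] at ht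
    rw [Finset.mem_sigma, Finset.mem_powersetCard]
    refine ⟨ht.1 hit, ?_, ?_⟩
    · exact Finset.erase_subset_erase i ht.1
    · rw [Finset.card_erase_of_mem hit, ht.2]; omega
  · rintro ⟨i, s⟩ hp
    rw [Finset.mem_sigma] at hp
    have his : i ∉ s := fun h => (Finset.notMem_erase i A)
      ((Finset.mem_powersetCard.1 hp.2).1 h)
    simp [Finset.erase_insert his]
  · rintro ⟨t, i⟩ hq
    rw [Finset.mem_sigma] at hq
    simp [Finset.insert_erase hq.2]
  · rintro ⟨i, s⟩ hp
    rw [Finset.mem_sigma] at hp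
    have his : i ∉ s := fun h => (Finset.notMem_erase i A)
      ((Finset.mem_powersetCard.1 hp.2).1 h)
    simp [Finset.erase_insert his]

lemma esE_smul {n : ℕ} (A : Finset (Fin n)) (k : ℕ) (c : ℝ) (x : Fin n → ℝ) :
    esE A k (c • x) = c ^ k * esE A k x := by
  unfold esE
  rw [Finset.mul_sum]
  refine Finset.sum_congr rfl fun s hs => ?_
  have hcard : s.card = k := (Finset.mem_powersetCard.1 hs).2
  simp only [Pi.smul_apply, smul_eq_mul]
  rw [Finset.prod_mul_distrib, Finset.prod_const, hcard]

lemma harmonic_mono {a b b' : ℝ} (ha : 0 < a) (hb : 0 < b) (hbb : b ≤ b') :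
    a * b / (a + b) ≤ a * b' / (a + b') := by
  have hb' : 0 < b' := lt_of_lt_of_le hb hbb
  rw [div_le_div_iff₀ (by positivity) (by positivity)]
  nlinarith [sq_nonneg a, mul_pos ha hb]

lemma harmonic_superadd {a b c d : ℝ} (ha : 0 < a) (hb : 0 < b) (hc : 0 < c) (hd : 0 < d) :
    a * b / (a + b) + c * d / (c + d) ≤ (a + c) * (b + d) / ((a + c) + (b + d)) := by
  rw [div_add_div _ _ (by positivity) (by positivity), div_le_div_iff₀ (by positivity)
    (by positivity)]
  nlinarith [sq_nonneg (a * d - b * c), mul_pos ha hb, mul_pos hc hd, mul_pos ha hd,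
    mul_pos hb hc, mul_pos (mul_pos ha hb) (mul_pos hc hd)]

/-- Marcus–Lopes superadditivity. -/
lemma esE_ratio_superadd {n : ℕ} : ∀ (k : ℕ) (A : Finset (Fin n)), k + 1 ≤ A.card →
    ∀ (x y : Fin n → ℝ), (∀ i, 0 < x i) → (∀ i, 0 < y i) →
    esE A (k + 1) x / esE A k x + esE A (k + 1) y / esE A k y
      ≤ esE A (k + 1) (x + y) / esE A k (x + y) := by
  intro k
  induction k with
  | zero =>
    intro A _ x y _ _
    simp [esE_zero, esE_one, Finset.sum_add_distrib]
  | succ k ih =>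
    intro A hA x y hx hy
    set z := x + y with hz
    have hzpos : ∀ i, 0 < z i := fun i => add_pos (hx i) (hy i)
    -- representation: for positive w, the ratio times (k+2) is a sum of harmonic means
    have rep : ∀ w : Fin n → ℝ, (∀ i, 0 < w i) →
        ((k : ℝ) + 2) * (esE A (k + 2) w / esE A (k + 1) w)
          = ∑ i ∈ A, w i * (esE (A.erase i) (k + 1) w / esE (A.erase i) k w)
              / (w i + esE (A.erase i) (k + 1) w / esE (A.erase i) k w) := by
      intro w hw
      have hEk1 : 0 < esE A (k + 1) w := esE_pos (by omega) hw
      have key := esE_deriv A (k + 1) w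
      have : ((k : ℝ) + 2) * (esE A (k + 2) w / esE A (k + 1) w)
          = (∑ i ∈ A, w i * esE (A.erase i) (k + 1) w) / esE A (k + 1) w := by
        rw [key]; push_cast; ring
      rw [this, Finset.sum_div]
      refine Finset.sum_congr rfl fun i hi => ?_
      have hcard : k + 1 ≤ (A.erase i).card := by
        rw [Finset.card_erase_of_mem hi]; omega
      have hEk' : 0 < esE (A.erase i) k w := esE_pos (by omega) hw
      have hEk1' : 0 < esE (A.erase i) (k + 1) w := esE_pos hcard hw
      have hsplit : esE A (k + 1) w
          = esE (A.erase i) (k + 1) w + w i * esE (A.erase i) k w := esE_erase hi k w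
      rw [hsplit]
      have hwi := hw i
      rw [div_eq_div_iff (by positivity) (by positivity)]
      field_simp
      ring
    have hφpos : ∀ (w : Fin n → ℝ), (∀ i, 0 < w i) → ∀ i ∈ A,
        0 < esE (A.erase i) (k + 1) w / esE (A.erase i) k w := by
      intro w hw i hi
      have hcard : k + 1 ≤ (A.erase i).card := by
        rw [Finset.card_erase_of_mem hi]; omega
      exact div_pos (esE_pos hcard hw) (esE_pos (by omega) hw)
    have main : ((k : ℝ) + 2) * (esE A (k + 2) x / esE A (k + 1) x)
        + ((k : ℝ) + 2) * (esE A (k + 2) y / esE A (k + 1) y)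
        ≤ ((k : ℝ) + 2) * (esE A (k + 2) z / esE A (k + 1) z) := by
      rw [rep x hx, rep y hy, rep z hzpos, ← Finset.sum_add_distrib]
      refine Finset.sum_le_sum fun i hi => ?_
      set bx := esE (A.erase i) (k + 1) x / esE (A.erase i) k x with hbx
      set by' := esE (A.erase i) (k + 1) y / esE (A.erase i) k y with hby
      set bz := esE (A.erase i) (k + 1) z / esE (A.erase i) k z with hbz
      have hbxp : 0 < bx := hφpos x hx i hi
      have hbyp : 0 < by' := hφpos y hy i hi
      have hcard : k + 1 ≤ (A.erase i).card := by
        rw [Finset.card_erase_of_mem hi]; omega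
      have hIH : bx + by' ≤ bz := ih (A.erase i) hcard x y hx hy
      calc x i * bx / (x i + bx) + y i * by' / (y i + by')
          ≤ (x i + y i) * (bx + by') / ((x i + y i) + (bx + by')) :=
            harmonic_superadd (hx i) hbxp (hy i) hbyp
        _ ≤ (x i + y i) * bz / ((x i + y i) + bz) :=
            harmonic_mono (add_pos (hx i) (hy i)) (add_pos hbxp hbyp) hIH
        _ = z i * bz / (z i + bz) := by simp [hz]
    have hk2 : (0 : ℝ) < (k : ℝ) + 2 := by positivity
    have := (mul_le_mul_iff_of_pos_left hk2).1 (by linarith [main] :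
      ((k : ℝ) + 2) * (esE A (k + 2) x / esE A (k + 1) x + esE A (k + 2) y / esE A (k + 1) y)
        ≤ ((k : ℝ) + 2) * (esE A (k + 2) z / esE A (k + 1) z))
    convert this using 3 <;> omega

/-- For `1 ≤ k ≤ n - 1`, the symmetric function mean `x ↦ e_{k+1}(x) / e_k(x)` is concave
on the open positive orthant, where `e_j` is the `j`-th elementary symmetric polynomial. -/
theorem esymm_ratio_concave (n k : ℕ) (hk1 : 1 ≤ k) (hk2 : k ≤ n - 1) :
    ConcaveOn ℝ (Set.univ.pi fun _ : Fin n => Set.Ioi (0 : ℝ))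
      (fun x : Fin n → ℝ =>
        (∑ s ∈ Finset.univ.powersetCard (k + 1), ∏ i ∈ s, x i) /
        (∑ s ∈ Finset.univ.powersetCard k, ∏ i ∈ s, x i)) := by
  have hn2 : 2 ≤ n := by omega
  have hkn : k + 1 ≤ n := by omega
  have hcard : (Finset.univ : Finset (Fin n)).card = n := by simp
  constructor
  · exact convex_pi fun i _ => convex_Ioi 0
  · intro x hx y hy a b ha hb hab
    have hx' : ∀ i, 0 < x i := fun i => hx i (Set.mem_univ i)
    have hy' : ∀ i, 0 < y i := fun i => hy i (Set.mem_univ i)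
    show a • (esE Finset.univ (k + 1) x / esE Finset.univ k x)
        + b • (esE Finset.univ (k + 1) y / esE Finset.univ k y)
        ≤ esE Finset.univ (k + 1) (a • x + b • y) / esE Finset.univ k (a • x + b • y)
    rcases eq_or_lt_of_le ha with rfl | ha'
    · have hb1 : b = 1 := by linarith
      subst hb1; simp
    rcases eq_or_lt_of_le hb with rfl | hb'
    · have ha1 : a = 1 := by linarith
      subst ha1; simp
    have hax : ∀ i, 0 < (a • x) i := fun i => by
      simpa [smul_eq_mul] using mul_pos ha' (hx' i)
    have hby : ∀ i, 0 < (b • y) i := fun i => by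
      simpa [smul_eq_mul] using mul_pos hb' (hy' i)
    have hsup := esE_ratio_superadd k Finset.univ (by rw [hcard]; omega)
      (a • x) (b • y) hax hby
    have hhomx : esE Finset.univ (k + 1) (a • x) / esE Finset.univ k (a • x)
        = a * (esE Finset.univ (k + 1) x / esE Finset.univ k x) := by
      rw [esE_smul, esE_smul]
      have hEk : (0 : ℝ) < esE Finset.univ k x := esE_pos (by omega) hx'
      have hak : (0 : ℝ) < a ^ k := by positivity
      rw [pow_succ]
      field_simp
    have hhomy : esE Finset.univ (k + 1) (b • y) / esE Finset.univ k (b • y)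
        = b * (esE Finset.univ (k + 1) y / esE Finset.univ k y) := by
      rw [esE_smul, esE_smul]
      have hEk : (0 : ℝ) < esE Finset.univ k y := esE_pos (by omega) hy'
      have hbk : (0 : ℝ) < b ^ k := by positivity
      rw [pow_succ]
      field_simp
    rw [hhomx, hhomy] at hsup
    simpa [smul_eq_mul] using hsup
end
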